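/- Monotonicity of the final size in the attendance rate: let R₀ > 0, s₀ ∈ (0,1), r₀ ∈ [0,1) with s₀ + r₀ < 1, and let 0 < a₁ < a₂ ≤ 1. If s₁ ∈ (0, s₀) satisfies s₁ = s₀·exp(-a₁·R₀·(1 - r₀ - s₁)) and s₂ ∈ (0, s₀) satisfies s₂ = s₀·exp(-a₂·R₀·(1 - r₀ - s₂)), and each sᵢ is the unique zero in (0, s₀) of hᵢ(s) = s - s₀·exp(-aᵢ·R₀·(1 - r₀ - s)), then s₂ < s₁; equivalently, a higher attendance rate yields a strictly larger final recovered fraction r_∞ = 1 - s. -/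
import Mathlib


/-- **Monotonicity of the final size in the attendance rate.**
Let `R₀ > 0`, `s₀ ∈ (0,1)`, `r₀ ∈ [0,1)` with `s₀ + r₀ < 1`, and
`0 < a₁ < a₂ ≤ 1`.  If `s₁ ∈ (0, s₀)` satisfies the final size relation for
`a₁`, `s₂ ∈ (0, s₀)` satisfies it for `a₂`, and each `sᵢ` is the unique
solution in `(0, s₀)` of the corresponding relation, then `s₂ < s₁`;
equivalently a higher attendance rate yields a strictly larger final recovered
fraction `1 − s`. -/
theorem finalSize_antitone_in_attendance
    (R₀ s₀ r₀ a₁ a₂ : ℝ)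
    (hR₀ : 0 < R₀)
    (hs₀ : s₀ ∈ Set.Ioo (0:ℝ) 1) (hr₀ : r₀ ∈ Set.Ico (0:ℝ) 1)
    (hsum : s₀ + r₀ < 1)
    (ha₁ : 0 < a₁) (ha₁₂ : a₁ < a₂) (ha₂ : a₂ ≤ 1)
    (s₁ s₂ : ℝ)
    (hs₁ : s₁ ∈ Set.Ioo 0 s₀)
    (heq₁ : s₁ = s₀ * Real.exp (-(a₁ * R₀) * (1 - r₀ - s₁)))
    (huniq₁ : ∀ s ∈ Set.Ioo 0 s₀,
      s = s₀ * Real.exp (-(a₁ * R₀) * (1 - r₀ - s)) → s = s₁)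
    (hs₂ : s₂ ∈ Set.Ioo 0 s₀)
    (heq₂ : s₂ = s₀ * Real.exp (-(a₂ * R₀) * (1 - r₀ - s₂)))
    (huniq₂ : ∀ s ∈ Set.Ioo 0 s₀,
      s = s₀ * Real.exp (-(a₂ * R₀) * (1 - r₀ - s)) → s = s₂) :
    s₂ < s₁ ∧ 1 - s₁ < 1 - s₂ := by
  obtain ⟨hs₂0, hs₂s₀⟩ := hs₂
  have hpos₂ : 0 < 1 - r₀ - s₂ := by linarith
  have hpos₀ : 0 < 1 - r₀ - s₀ := by linarith
  have hlt : s₂ < s₀ * Real.exp (-(a₁ * R₀) * (1 - r₀ - s₂)) := by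
    nth_rewrite 1 [heq₂]
    have hexp : Real.exp (-(a₂ * R₀) * (1 - r₀ - s₂)) <
        Real.exp (-(a₁ * R₀) * (1 - r₀ - s₂)) := by
      apply Real.exp_lt_exp.2
      nlinarith [mul_pos (mul_pos (sub_pos.2 ha₁₂) hR₀) hpos₂]
    nlinarith [hs₀.1]
  have hgt : s₀ * Real.exp (-(a₁ * R₀) * (1 - r₀ - s₀)) < s₀ := by
    have hexp : Real.exp (-(a₁ * R₀) * (1 - r₀ - s₀)) < 1 := by
      apply Real.exp_lt_one_iff.2
      nlinarith [mul_pos (mul_pos ha₁ hR₀) hpos₀]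
    nlinarith [hs₀.1]
  set f : ℝ → ℝ := fun s => s - s₀ * Real.exp (-(a₁ * R₀) * (1 - r₀ - s)) with hf
  have hcont : ContinuousOn f (Set.Icc s₂ s₀) := by
    apply Continuous.continuousOn
    exact continuous_id.sub (continuous_const.mul (Real.continuous_exp.comp
      (continuous_const.mul (continuous_const.sub continuous_id))))
  have hmem : (0:ℝ) ∈ Set.Ioo (f s₂) (f s₀) := by
    constructor
    · show f s₂ < 0
      simp only [hf]; linarith
    · show (0:ℝ) < f s₀
      simp only [hf]; linarith
  have himg := intermediate_value_Ioo hs₂s₀.le hcont hmem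
  obtain ⟨x, hx, hfx⟩ := himg
  have hxeq : x = s₀ * Real.exp (-(a₁ * R₀) * (1 - r₀ - x)) := by
    have : x - s₀ * Real.exp (-(a₁ * R₀) * (1 - r₀ - x)) = 0 := hfx
    linarith
  have hx01 : x ∈ Set.Ioo 0 s₀ := ⟨lt_trans hs₂0 hx.1, hx.2⟩
  have := huniq₁ x hx01 hxeq
  constructor
  · rw [← this]; exact hx.1
  · rw [← this]; linarith [hx.1]
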